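/- For every pair of natural numbers M₁ ≥ 1 and D₁ ≥ 1 and every real δ₁ > 0, there exist reals ρ > 0 and β > 0 such that all three conditions C1, C2 and C3 (with M = M₁, D = D₁, δ = δ₁) hold simultaneously. In particular, it suffices to choose ρ ≥ ((1 − 1/(M₁+1))^{−D₁} − 1)·(1 + (D₁−1)δ₁) and β ≥ max{ ((1 − δ₁/(1+δ₁))^{−M₁} − 1)·(1 + (M₁−1)/M₁), 2^{D₁}·(1 − (D₁−1)δ₁/(1+(D₁−1)δ₁))^{−M₁} − 1 }. -/

import Mathlib

open Real
set_option maxHeartbeats 1000000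

lemma aux_log2 (x y : ℝ) (n : ℕ) (hx : 0 < x) (hy : 0 < y) (h : 1 ≤ x * y ^ n) :
    0 ≤ Real.logb 2 x + (n : ℝ) * Real.logb 2 y := by
  have h0 := Real.logb_nonneg (b := 2) (by norm_num) h
  rwa [Real.logb_mul (ne_of_gt hx) (by positivity), Real.logb_pow] at h0

lemma aux_log3 (x y z : ℝ) (m n : ℕ) (hx : 0 < x) (hy : 0 < y) (hz : 0 < z)
    (h : 1 ≤ x ^ m * y ^ n * z) :
    0 ≤ (m : ℝ) * Real.logb 2 x + (n : ℝ) * Real.logb 2 y + Real.logb 2 z := by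
  have h0 := Real.logb_nonneg (b := 2) (by norm_num) h
  rwa [Real.logb_mul (by positivity) (ne_of_gt hz),
    Real.logb_mul (by positivity) (by positivity), Real.logb_pow, Real.logb_pow] at h0

/-- Condition C1 of the NP-hardness reduction. -/
def JSDM.C1 (ρ β δ : ℝ) (M : ℕ) : Prop :=
  0 ≤ Real.logb 2 (1 + β / (1 + ((M : ℝ) - 1) / (M : ℝ))) +
    (M : ℝ) * Real.logb 2 (1 - ρ * δ / ((1 + ρ) * (1 + δ)))

/-- Condition C2 of the NP-hardness reduction. -/
def JSDM.C2 (ρ β δ : ℝ) (M D : ℕ) : Prop :=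
  0 ≤ Real.logb 2 (1 + ρ / (1 + ((D : ℝ) - 1) * δ)) +
    (D : ℝ) * Real.logb 2 (1 - β / ((β + 1) * ((M : ℝ) + 1)))

/-- Condition C3 of the NP-hardness reduction. -/
def JSDM.C3 (ρ β δ : ℝ) (M D : ℕ) : Prop :=
  0 ≤ (M : ℝ) * Real.logb 2 ((1 + ρ + ((D : ℝ) - 1) * δ) /
      ((1 + ((D : ℝ) - 1) * δ) * (1 + ρ))) +
    (D : ℝ) * Real.logb 2 ((β * (M : ℝ) + 2 * (M : ℝ) - 1) /
      ((2 * (M : ℝ) - 1) * (1 + β))) + Real.logb 2 (1 + β)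

/-- Lemma 4: for any `M₁ ≥ 1`, `D₁ ≥ 1` and `δ₁ > 0`, there exist `ρ, β > 0`
satisfying C1, C2 and C3 simultaneously; in particular the explicit choices
`ρ ≥ ((1 - 1/(M₁+1))^{-D₁} - 1)(1 + (D₁-1)δ₁)` and
`β ≥ max{((1 - δ₁/(1+δ₁))^{-M₁} - 1)(1 + (M₁-1)/M₁),
        2^{D₁}(1 - (D₁-1)δ₁/(1+(D₁-1)δ₁))^{-M₁} - 1}` suffice. -/
theorem jsdm_lemma4_conditions_satisfiable
    (M₁ D₁ : ℕ) (hM : 1 ≤ M₁) (hD : 1 ≤ D₁) (δ₁ : ℝ) (hδ : 0 < δ₁) :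
    (∃ ρ β : ℝ, 0 < ρ ∧ 0 < β ∧
      JSDM.C1 ρ β δ₁ M₁ ∧ JSDM.C2 ρ β δ₁ M₁ D₁ ∧ JSDM.C3 ρ β δ₁ M₁ D₁) ∧
    (∀ ρ β : ℝ,
      (((1 - 1 / ((M₁ : ℝ) + 1)) ^ D₁)⁻¹ - 1) * (1 + ((D₁ : ℝ) - 1) * δ₁) ≤ ρ →
      max ((((1 - δ₁ / (1 + δ₁)) ^ M₁)⁻¹ - 1) * (1 + ((M₁ : ℝ) - 1) / (M₁ : ℝ)))
          ((2 : ℝ) ^ D₁ *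
            ((1 - ((D₁ : ℝ) - 1) * δ₁ / (1 + ((D₁ : ℝ) - 1) * δ₁)) ^ M₁)⁻¹ - 1) ≤ β →
      JSDM.C1 ρ β δ₁ M₁ ∧ JSDM.C2 ρ β δ₁ M₁ D₁ ∧ JSDM.C3 ρ β δ₁ M₁ D₁) := by
  have hm : (1 : ℝ) ≤ (M₁ : ℝ) := by exact_mod_cast hM
  have hd : (1 : ℝ) ≤ (D₁ : ℝ) := by exact_mod_cast hD
  set m : ℝ := (M₁ : ℝ) with hmdef
  set a : ℝ := ((D₁ : ℝ) - 1) * δ₁ with hadef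
  have ha : 0 ≤ a := by
    have : (0:ℝ) ≤ (D₁ : ℝ) - 1 := by linarith
    positivity
  have h1a : (0:ℝ) < 1 + a := by linarith
  have hmpos : (0:ℝ) < m := by linarith
  have h1δ : (0:ℝ) < 1 + δ₁ := by linarith
  have e1 : (((1 - δ₁ / (1 + δ₁)) ^ M₁)⁻¹ : ℝ) = (1 + δ₁) ^ M₁ := by
    rw [show (1 - δ₁ / (1 + δ₁) : ℝ) = 1 / (1 + δ₁) by (field_simp; ring), one_div, inv_pow, inv_inv]
  have e2 : (((1 - 1 / (m + 1)) ^ D₁)⁻¹ : ℝ) = ((m + 1) / m) ^ D₁ := by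
    rw [show (1 - 1 / (m + 1) : ℝ) = m / (m + 1) by (field_simp; ring), ← inv_pow, inv_div]
  have e3 : (((1 - a / (1 + a)) ^ M₁)⁻¹ : ℝ) = (1 + a) ^ M₁ := by
    rw [show (1 - a / (1 + a) : ℝ) = 1 / (1 + a) by (field_simp; ring), one_div, inv_pow, inv_inv]
  have hmm : (1:ℝ) < (m + 1) / m := by
    rw [lt_div_iff₀ hmpos]; linarith
  have hpow1 : (1:ℝ) < ((m + 1) / m) ^ D₁ := one_lt_pow₀ hmm (by omega)
  have h2D : (2:ℝ) ≤ (2:ℝ) ^ D₁ := by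
    calc (2:ℝ) = 2 ^ 1 := (pow_one 2).symm
    _ ≤ 2 ^ D₁ := pow_le_pow_right₀ (by norm_num) hD
  have h1aM : (1:ℝ) ≤ (1 + a) ^ M₁ := one_le_pow₀ (by linarith)
  have hc : (0:ℝ) < 1 + (m - 1) / m := by
    have : (0:ℝ) ≤ (m - 1) / m := div_nonneg (by linarith) (by linarith)
    linarith
  have key : ∀ ρ β : ℝ,
      (((1 - 1 / (m + 1)) ^ D₁)⁻¹ - 1) * (1 + a) ≤ ρ →
      max ((((1 - δ₁ / (1 + δ₁)) ^ M₁)⁻¹ - 1) * (1 + (m - 1) / m))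
          ((2 : ℝ) ^ D₁ * ((1 - a / (1 + a)) ^ M₁)⁻¹ - 1) ≤ β →
      JSDM.C1 ρ β δ₁ M₁ ∧ JSDM.C2 ρ β δ₁ M₁ D₁ ∧ JSDM.C3 ρ β δ₁ M₁ D₁ := by
    intro ρ β hρ hβ
    rw [e2] at hρ
    rw [e1, e3] at hβ
    have hβ1 : ((1 + δ₁) ^ M₁ - 1) * (1 + (m - 1) / m) ≤ β :=
      le_trans (le_max_left _ _) hβ
    have hβ2 : (2 : ℝ) ^ D₁ * (1 + a) ^ M₁ - 1 ≤ β :=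
      le_trans (le_max_right _ _) hβ
    have hρ0 : 0 < ρ :=
      lt_of_lt_of_le (mul_pos (by linarith) h1a) hρ
    have hβ0 : 0 < β := lt_of_lt_of_le (by nlinarith) hβ2
    refine ⟨?_, ?_, ?_⟩
    · -- C1
      have ht : 1 / (1 + δ₁) ≤ 1 - ρ * δ₁ / ((1 + ρ) * (1 + δ₁)) := by
        have h1 : ρ * δ₁ / ((1 + ρ) * (1 + δ₁)) ≤ δ₁ / (1 + δ₁) := by
          rw [div_le_div_iff₀ (by positivity) (by positivity)]; nlinarith
        have h2 : (1:ℝ) - δ₁ / (1 + δ₁) = 1 / (1 + δ₁) := by field_simp; ring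
        linarith
      have htpos : 0 < 1 - ρ * δ₁ / ((1 + ρ) * (1 + δ₁)) :=
        lt_of_lt_of_le (by positivity) ht
      have hx1 : (1 + δ₁) ^ M₁ ≤ 1 + β / (1 + (m - 1) / m) := by
        rw [← sub_le_iff_le_add', le_div_iff₀ hc]; exact hβ1
      apply aux_log2 _ _ _ (by positivity) htpos
      calc (1:ℝ) = (1 + δ₁) ^ M₁ * (1 / (1 + δ₁)) ^ M₁ := by
            rw [div_pow, one_pow, mul_one_div, div_self (by positivity)]
        _ ≤ (1 + β / (1 + (m - 1) / m)) * (1 - ρ * δ₁ / ((1 + ρ) * (1 + δ₁))) ^ M₁ :=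
            mul_le_mul hx1 (pow_le_pow_left₀ (by positivity) ht M₁) (by positivity)
              (by positivity)
    · -- C2
      have hy2 : m / (m + 1) ≤ 1 - β / ((β + 1) * (m + 1)) := by
        have h1 : β / ((β + 1) * (m + 1)) ≤ 1 / (m + 1) := by
          rw [div_le_div_iff₀ (by positivity) (by positivity)]; nlinarith
        have h2 : (1:ℝ) - 1 / (m + 1) = m / (m + 1) := by field_simp; ring
        linarith
      have hy2pos : 0 < 1 - β / ((β + 1) * (m + 1)) :=
        lt_of_lt_of_le (by positivity) hy2
      have hx2 : ((m + 1) / m) ^ D₁ ≤ 1 + ρ / (1 + a) := by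
        rw [← sub_le_iff_le_add', le_div_iff₀ h1a]; exact hρ
      apply aux_log2 _ _ _ (by positivity) hy2pos
      calc (1:ℝ) = ((m + 1) / m) ^ D₁ * (m / (m + 1)) ^ D₁ := by
            rw [← mul_pow, show ((m + 1) / m) * (m / (m + 1)) = 1 by field_simp, one_pow]
        _ ≤ (1 + ρ / (1 + a)) * (1 - β / ((β + 1) * (m + 1))) ^ D₁ :=
            mul_le_mul hx2 (pow_le_pow_left₀ (by positivity) hy2 D₁) (by positivity)
              (by positivity)
    · -- C3
      have hvden : (0:ℝ) < (2 * m - 1) * (1 + β) :=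
        mul_pos (by linarith) (by linarith)
      have h1ρ : (0:ℝ) < 1 + ρ := by linarith
      have hu : 1 / (1 + a) ≤ (1 + ρ + a) / ((1 + a) * (1 + ρ)) := by
        rw [div_le_div_iff₀ h1a (mul_pos h1a h1ρ)]; nlinarith
      have hupos : 0 < (1 + ρ + a) / ((1 + a) * (1 + ρ)) :=
        div_pos (by linarith) (mul_pos h1a h1ρ)
      have hv : (1:ℝ) / 2 ≤ (β * m + 2 * m - 1) / ((2 * m - 1) * (1 + β)) := by
        rw [div_le_div_iff₀ (by norm_num) hvden]; nlinarith
      have hvpos : 0 < (β * m + 2 * m - 1) / ((2 * m - 1) * (1 + β)) :=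
        lt_of_lt_of_le (by norm_num) hv
      apply aux_log3 _ _ _ _ _ hupos hvpos (by linarith)
      have heq : ((1:ℝ) / (1 + a)) ^ M₁ * ((1:ℝ) / 2) ^ D₁ * ((2:ℝ) ^ D₁ * (1 + a) ^ M₁)
          = 1 := by
        rw [div_pow, div_pow, one_pow, one_pow]
        field_simp
      calc (1:ℝ) = ((1:ℝ) / (1 + a)) ^ M₁ * ((1:ℝ) / 2) ^ D₁ *
              ((2:ℝ) ^ D₁ * (1 + a) ^ M₁) := heq.symm
        _ ≤ ((1 + ρ + a) / ((1 + a) * (1 + ρ))) ^ M₁ *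
              ((β * m + 2 * m - 1) / ((2 * m - 1) * (1 + β))) ^ D₁ * (1 + β) :=
            mul_le_mul
              (mul_le_mul (pow_le_pow_left₀ (by positivity) hu M₁)
                (pow_le_pow_left₀ (by norm_num) hv D₁) (by positivity) (by positivity))
              (by linarith) (by positivity) (by positivity)
  refine ⟨?_, fun ρ β h1 h2 => key ρ β h1 h2⟩
  · refine ⟨(((1 - 1 / (m + 1)) ^ D₁)⁻¹ - 1) * (1 + a),
      max ((((1 - δ₁ / (1 + δ₁)) ^ M₁)⁻¹ - 1) * (1 + (m - 1) / m))
          ((2 : ℝ) ^ D₁ * ((1 - a / (1 + a)) ^ M₁)⁻¹ - 1), ?_, ?_, ?_⟩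
    · rw [e2]; exact mul_pos (by linarith) h1a
    · have hpos : (0:ℝ) < (2 : ℝ) ^ D₁ * ((1 - a / (1 + a)) ^ M₁)⁻¹ - 1 := by
        rw [e3]; nlinarith
      exact lt_of_lt_of_le hpos (le_max_right _ _)
    · exact key _ _ le_rfl le_rfl
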